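/- If a sequence (K_n, d^{K_n}) of nonempty compact metric spaces converges to a nonempty compact metric space (K, d^K) in the Gromov–Hausdorff topology, then for every ε > 0 that is a continuity point of the map ε' ↦ N_{d^K}(K, ε'), one has lim_{n→∞} N_{d^{K_n}}(K_n, ε) = N_{d^K}(K, ε). In particular this equality holds for all but countably many ε > 0. -/

import Mathlib

open Filter Set
open Metric
open scoped ENNReal Topology

universe u v

/-- The metric entropy `N_d(K, ε)` of a subset `K` of a metric space: the minimal cardinality
of a finite subset `A ⊆ K` such that every point of `K` is within distance `ε` of `A`. -/
noncomputable def coveringNumber {S : Type*} [MetricSpace S] (K : Set S) (ε : ℝ) : ℕ :=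
  sInf {n : ℕ | ∃ A : Finset S, ↑A ⊆ K ∧ A.card = n ∧ ∀ x ∈ K, ∃ a ∈ A, dist x a ≤ ε}

lemma covSet_nonempty {S : Type*} [MetricSpace S] [CompactSpace S] {ε : ℝ} (hε : 0 < ε) :
    {n : ℕ | ∃ A : Finset S, ↑A ⊆ (univ : Set S) ∧ A.card = n ∧
      ∀ x ∈ (univ : Set S), ∃ a ∈ A, dist x a ≤ ε}.Nonempty := by
  obtain ⟨t, -, tfin, ht⟩ := finite_cover_balls_of_compact (isCompact_univ (X := S)) hε
  refine ⟨tfin.toFinset.card, tfin.toFinset, by simp, rfl, fun x _ => ?_⟩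
  obtain ⟨a, ha, hxa⟩ := mem_iUnion₂.1 (ht (mem_univ x))
  exact ⟨a, tfin.mem_toFinset.2 ha, (mem_ball.1 hxa).le⟩

lemma exists_min_cover {S : Type*} [MetricSpace S] [CompactSpace S] {ε : ℝ} (hε : 0 < ε) :
    ∃ A : Finset S, A.card = coveringNumber (univ : Set S) ε ∧
      ∀ x : S, ∃ a ∈ A, dist x a ≤ ε := by
  have := Nat.sInf_mem (covSet_nonempty (S := S) hε)
  obtain ⟨A, -, hcard, hcov⟩ := this
  exact ⟨A, hcard, fun x => hcov x (mem_univ x)⟩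

lemma coveringNumber_le_card {S : Type*} [MetricSpace S] {ε : ℝ} (A : Finset S)
    (h : ∀ x : S, ∃ a ∈ A, dist x a ≤ ε) :
    coveringNumber (univ : Set S) ε ≤ A.card :=
  Nat.sInf_le ⟨A, by simp, rfl, fun x _ => h x⟩

lemma coveringNumber_anti {S : Type*} [MetricSpace S] [CompactSpace S] {ε ε' : ℝ}
    (hε : 0 < ε) (h : ε ≤ ε') :
    coveringNumber (univ : Set S) ε' ≤ coveringNumber (univ : Set S) ε := by
  obtain ⟨A, hcard, hcov⟩ := exists_min_cover (S := S) hε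
  rw [← hcard]
  exact coveringNumber_le_card A fun x => (hcov x).imp fun a ⟨ha, hd⟩ => ⟨ha, hd.trans h⟩

lemma coveringNumber_le_of_hausdorffDist {X Y Z : Type*} [DecidableEq X] [MetricSpace X] [MetricSpace Y]
    [MetricSpace Z] [CompactSpace X] [CompactSpace Y] [Nonempty X] [Nonempty Y]
    {f : X → Z} {g : Y → Z} (hf : Isometry f) (hg : Isometry g) {δ ε : ℝ}
    (hδ : 0 ≤ δ) (hε : 0 < ε) (hd : hausdorffDist (Set.range f) (Set.range g) ≤ δ) :
    coveringNumber (univ : Set X) (ε + 2 * δ) ≤ coveringNumber (univ : Set Y) ε := by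
  have hcf : IsCompact (range f) := isCompact_range hf.continuous
  have hcg : IsCompact (range g) := isCompact_range hg.continuous
  have hne : EMetric.hausdorffEdist (range f) (range g) ≠ ⊤ :=
    hausdorffEdist_ne_top_of_nonempty_of_bounded (range_nonempty f) (range_nonempty g)
      hcf.isBounded hcg.isBounded
  obtain ⟨A, hcard, hcov⟩ := exists_min_cover (S := Y) hε
  have hc : ∀ a : Y, ∃ x : X, dist (g a) (f x) ≤ δ := by
    intro a
    obtain ⟨z, hz, hzd⟩ := hcf.exists_infDist_eq_dist (range_nonempty f) (g a)
    obtain ⟨x, rfl⟩ := hz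
    refine ⟨x, ?_⟩
    rw [← hzd]
    have hne' : EMetric.hausdorffEdist (range g) (range f) ≠ ⊤ := by
      rw [show EMetric.hausdorffEdist (range g) (range f) = hausdorffEDist (range f) (range g) from hausdorffEDist_comm]; exact hne
    have h := infDist_le_hausdorffDist_of_mem (mem_range_self a) hne'
    rw [hausdorffDist_comm] at hd
    exact h.trans hd

  choose c hcδ using hc
  have hcov' : ∀ x : X, ∃ b ∈ A.image c, dist x b ≤ ε + 2 * δ := by
    intro x
    obtain ⟨z, hz, hzd⟩ := hcg.exists_infDist_eq_dist (range_nonempty g) (f x)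
    obtain ⟨y, rfl⟩ := hz
    have h1 : dist (f x) (g y) ≤ δ := by
      rw [← hzd]
      exact (infDist_le_hausdorffDist_of_mem (mem_range_self x) hne).trans hd
    obtain ⟨a, ha, hya⟩ := hcov y
    refine ⟨c a, Finset.mem_image_of_mem c ha, ?_⟩
    have : dist x (c a) = dist (f x) (f (c a)) := (hf.dist_eq _ _).symm
    rw [this]
    calc dist (f x) (f (c a)) ≤ dist (f x) (g y) + dist (g y) (g a) + dist (g a) (f (c a)) :=
          dist_triangle4 _ _ _ _
      _ ≤ δ + ε + δ := by
          have h2 : dist (g y) (g a) ≤ ε := by rw [hg.dist_eq]; exact hya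
          have h3 := hcδ a
          gcongr
      _ = ε + 2 * δ := by ring
  calc coveringNumber (univ : Set X) (ε + 2 * δ) ≤ (A.image c).card :=
        coveringNumber_le_card _ hcov'
    _ ≤ A.card := Finset.card_image_le
    _ = _ := hcard

lemma nat_eq_of_abs_sub_lt_one {a b : ℕ} (h : |(a : ℝ) - b| < 1) : a = b := by
  rw [abs_sub_lt_iff] at h
  have h1 : (a : ℝ) < b + 1 := by linarith [h.1]
  have h2 : (b : ℝ) < a + 1 := by linarith [h.2]
  have h1' : a < b + 1 := by exact_mod_cast h1
  have h2' : b < a + 1 := by exact_mod_cast h2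
  omega

/-- (Theorem: convergence of metric entropies along Gromov–Hausdorff convergence.)
If nonempty compact metric spaces `K n` converge to `L` in the Gromov–Hausdorff topology,
then for every `ε > 0` which is a continuity point of `ε' ↦ N(L, ε')`, one has
`N(K n, ε) → N(L, ε)`; in particular this convergence holds for all but countably many
`ε > 0`. -/
theorem stmt3 (K : ℕ → Type u) [∀ n, MetricSpace (K n)] [∀ n, CompactSpace (K n)]
    [∀ n, Nonempty (K n)] (L : Type v) [MetricSpace L] [CompactSpace L] [Nonempty L]
    (hconv : Tendsto (fun n => GromovHausdorff.ghDist (K n) L) atTop (𝓝 0)) :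
    (∀ ε : ℝ, 0 < ε →
      ContinuousAt (fun e => (coveringNumber (Set.univ : Set L) e : ℝ)) ε →
      Tendsto (fun n => (coveringNumber (Set.univ : Set (K n)) ε : ℝ)) atTop
        (𝓝 (coveringNumber (Set.univ : Set L) ε))) ∧
    {ε : ℝ | 0 < ε ∧
      ¬ Tendsto (fun n => (coveringNumber (Set.univ : Set (K n)) ε : ℝ)) atTop
        (𝓝 (coveringNumber (Set.univ : Set L) ε))}.Countable := by
  classical
  set F : ℝ → ℕ := fun e => coveringNumber (Set.univ : Set L) e with hF
  have part1 : ∀ ε : ℝ, 0 < ε →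
      ContinuousAt (fun e => (F e : ℝ)) ε →
      Tendsto (fun n => (coveringNumber (Set.univ : Set (K n)) ε : ℝ)) atTop
        (𝓝 (F ε)) := by
    intro ε hε hcont
    -- local constancy of F near ε
    obtain ⟨r, hr0, hr⟩ : ∃ r > 0, ∀ e : ℝ, |e - ε| < r → F e = F ε := by
      rw [Metric.continuousAt_iff] at hcont
      obtain ⟨δ, hδ0, hδ⟩ := hcont 1 one_pos
      refine ⟨δ, hδ0, fun e he => ?_⟩
      have := hδ (x := e) (by rwa [Real.dist_eq])
      rw [Real.dist_eq] at this
      exact nat_eq_of_abs_sub_lt_one this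
    set d : ℝ := min r ε / 4 with hd
    have hd0 : 0 < d := by positivity
    have hdr : d < r := by
      have : min r ε ≤ r := min_le_left _ _
      have h4 : min r ε / 4 < r := by
        have := lt_of_le_of_lt this (by linarith : r < 4 * r)
        linarith [min_le_left r ε]
      exact h4
    have hdε : 2 * d < ε := by
      have : min r ε ≤ ε := min_le_right _ _
      have : d ≤ ε / 4 := by rw [hd]; linarith
      linarith
    have hFm : F (ε - d) = F ε := hr _ (by rw [abs_sub_lt_iff]; constructor <;> linarith)
    have hFp : F (ε + d) = F ε := hr _ (by rw [abs_sub_lt_iff]; constructor <;> linarith)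
    have heq : ∀ᶠ n in atTop,
        (coveringNumber (Set.univ : Set (K n)) ε : ℝ) = (F ε : ℝ) := by
      filter_upwards [hconv.eventually (gt_mem_nhds (show (0:ℝ) < d/2 by linarith))] with n hn
      have hopt := GromovHausdorff.hausdorffDist_optimal (X := K n) (Y := L)
      have hdle : hausdorffDist (range (GromovHausdorff.optimalGHInjl (K n) L))
          (range (GromovHausdorff.optimalGHInjr (K n) L)) ≤ d / 2 := by
        rw [hopt]; exact hn.le
      have hdle' : hausdorffDist (range (GromovHausdorff.optimalGHInjr (K n) L))
          (range (GromovHausdorff.optimalGHInjl (K n) L)) ≤ d / 2 := by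
        rwa [hausdorffDist_comm]
      have hle1 : coveringNumber (Set.univ : Set (K n)) ε ≤ F ε := by
        have := coveringNumber_le_of_hausdorffDist
          (GromovHausdorff.isometry_optimalGHInjl (K n) L)
          (GromovHausdorff.isometry_optimalGHInjr (K n) L)
          (le_of_lt (by linarith : (0:ℝ) < d/2)) (by linarith : (0:ℝ) < ε - d) hdle
        have he : ε - d + 2 * (d / 2) = ε := by ring
        rw [he] at this
        rw [← hFm]
        exact this
      have hle2 : F ε ≤ coveringNumber (Set.univ : Set (K n)) ε := by
        have := coveringNumber_le_of_hausdorffDist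
          (GromovHausdorff.isometry_optimalGHInjr (K n) L)
          (GromovHausdorff.isometry_optimalGHInjl (K n) L)
          (le_of_lt (by linarith : (0:ℝ) < d/2)) hε hdle'
        have he : ε + 2 * (d / 2) = ε + d := by ring
        rw [he] at this
        rw [← hFp]
        exact this
      exact_mod_cast congrArg (Nat.cast : ℕ → ℝ) (le_antisymm hle1 hle2)
    exact Tendsto.congr' (EventuallyEq.symm heq) tendsto_const_nhds
  refine ⟨part1, ?_⟩
  -- countability via an antitone ℝ≥0∞-valued extension
  set G : ℝ → ℝ≥0∞ := fun e => if 0 < e then (F e : ℝ≥0∞) else ⊤ with hG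
  have hGanti : Antitone G := by
    intro a b hab
    by_cases ha : 0 < a
    · have hb : 0 < b := lt_of_lt_of_le ha hab
      simp only [hG, if_pos ha, if_pos hb, Nat.cast_le]
      exact coveringNumber_anti ha hab
    · simp only [hG, if_neg ha, le_top]
  have hcount := hGanti.countable_not_continuousAt
  apply hcount.mono
  intro ε hε
  obtain ⟨hε0, hnt⟩ := hε
  simp only [mem_setOf_eq]
  intro hGc
  apply hnt
  apply part1 ε hε0
  -- ContinuousAt G ε implies local constancy of F near ε
  have hGε : G ε = (F ε : ℝ≥0∞) := by simp [hG, hε0]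
  have hconst : ∀ᶠ e in 𝓝 ε, F e = F ε := by
    have h0 : ∀ᶠ e in 𝓝 ε, 0 < e := eventually_gt_nhds hε0
    have hub : ∀ᶠ e in 𝓝 ε, G e < ((F ε + 1 : ℕ) : ℝ≥0∞) := by
      apply hGc.eventually_lt_const
      rw [hGε]
      exact_mod_cast Nat.lt_succ_self _
    rcases Nat.eq_zero_or_pos (F ε) with h|h
    · filter_upwards [h0, hub] with e he hube
      rw [hG] at hube
      simp only [if_pos he] at hube
      have : F e < F ε + 1 := by exact_mod_cast hube
      omega
    · have hlb : ∀ᶠ e in 𝓝 ε, ((F ε - 1 : ℕ) : ℝ≥0∞) < G e := by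
        apply hGc.eventually_const_lt
        rw [hGε]
        exact_mod_cast Nat.sub_lt h one_pos
      filter_upwards [h0, hub, hlb] with e he hube hlbe
      rw [hG] at hube hlbe
      simp only [if_pos he] at hube hlbe
      have h1 : F e < F ε + 1 := by exact_mod_cast hube
      have h2 : F ε - 1 < F e := by exact_mod_cast hlbe
      omega
  have : (fun e => (F e : ℝ)) =ᶠ[𝓝 ε] fun _ => (F ε : ℝ) := by
    filter_upwards [hconst] with e he using by rw [he]
  exact (continuousAt_const (y := (F ε : ℝ))).congr this.symm
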